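/- Let f(x) ∈ ℤ[x] be monic irreducible of degree n, θ a root, K = ℚ(θ). With notation as above, the elements α_{i,j,k} := q_{i,j}(θ)·θ^k (1 ≤ i ≤ t, 1 ≤ j ≤ ℓ_i, 0 ≤ k < deg φ_i) form a basis of ℤ_(p)[θ] as a ℤ_(p)-module. -/

import Mathlib

open Polynomial Finset Matrix

lemma aux_expansion {K : Type*} [Field K] {φ : K[X]} (hφ : φ.Monic) :
    ∀ (L : ℕ) (P : ℕ → K[X]), (∀ j, (P j).degree < φ.degree) →
      ∑ j ∈ Finset.range L, φ ^ j * P j = 0 → ∀ j < L, P j = 0 := by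
  intro L
  induction L with
  | zero => intro P _ _ j hj; omega
  | succ L ih =>
    intro P hP hsum j hj
    have hφ0 : φ ≠ 0 := hφ.ne_zero
    rw [Finset.sum_range_succ'] at hsum
    have hfac : ∑ j ∈ Finset.range L, φ ^ (j + 1) * P (j + 1)
        = φ * ∑ j ∈ Finset.range L, φ ^ j * P (j + 1) := by
      rw [Finset.mul_sum]; apply Finset.sum_congr rfl; intro i _; ring
    rw [hfac, pow_zero, one_mul] at hsum
    have hP0 : P 0 = 0 := by
      have hdvd : φ ∣ P 0 := by
        have h0 : P 0 = -(φ * ∑ j ∈ Finset.range L, φ ^ j * P (j + 1)) :=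
          eq_neg_of_add_eq_zero_right hsum
        rw [h0]; exact (dvd_mul_right φ _).neg_right
      exact eq_zero_of_dvd_of_degree_lt hdvd (hP 0)
    have hrest : ∑ j ∈ Finset.range L, φ ^ j * P (j + 1) = 0 := by
      rw [hP0, add_zero] at hsum
      exact (mul_eq_zero.mp hsum).resolve_left hφ0
    rcases Nat.eq_zero_or_pos j with rfl | hjpos
    · exact hP0
    · obtain ⟨j', rfl⟩ := Nat.exists_eq_add_of_le hjpos
      have := ih (fun j => P (j + 1)) (fun j => hP (j + 1)) hrest j' (by omega)
      simpa [Nat.add_comm] using this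

lemma aux_indep {K : Type*} [Field K] {t : ℕ} {D ℓ : Fin t → ℕ} (φ : Fin t → K[X])
    (hmon : ∀ i, (φ i).Monic) (hirr : ∀ i, Irreducible (φ i))
    (hdist : ∀ i j, i ≠ j → φ i ≠ φ j)
    (hdeg : ∀ i, (φ i).natDegree = D i)
    (c : (Σ i : Fin t, Fin (ℓ i) × Fin (D i)) → K)
    (hsum : ∑ x : (Σ i : Fin t, Fin (ℓ i) × Fin (D i)), c x •
      ((φ x.1) ^ (ℓ x.1 - 1 - (x.2.1 : ℕ)) * (∏ m ∈ Finset.univ.erase x.1, φ m ^ ℓ m)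
        * X ^ (x.2.2 : ℕ)) = 0) :
    ∀ x, c x = 0 := by
  classical
  have hD : ∀ i, 0 < D i := fun i => hdeg i ▸ (hirr i).natDegree_pos
  have hφ0 : ∀ i, φ i ≠ 0 := fun i => (hmon i).ne_zero
  have hdegφ : ∀ i, (φ i).degree = (D i : WithBot ℕ) := fun i => by
    rw [degree_eq_natDegree (hφ0 i), hdeg i]
  set P : ∀ i : Fin t, Fin (ℓ i) → K[X] :=
    fun i j => ∑ k : Fin (D i), C (c ⟨i, (j, k)⟩) * X ^ (k : ℕ) with hP
  have hPdeg : ∀ i j, (P i j).degree < (φ i).degree := by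
    intro i j
    rw [hdegφ i]
    refine lt_of_le_of_lt (degree_sum_le _ _) ?_
    rw [Finset.sup_lt_iff (by exact bot_lt_iff_ne_bot.mpr (by simp))]
    intro k _
    exact lt_of_le_of_lt (degree_C_mul_X_pow_le _ _) (by exact_mod_cast k.2)
  set Q : Fin t → K[X] := fun i => ∏ m ∈ Finset.univ.erase i, φ m ^ ℓ m with hQ
  set T : Fin t → K[X] :=
    fun i => ∑ j : Fin (ℓ i), φ i ^ (ℓ i - 1 - (j : ℕ)) * P i j with hT
  have step1 : ∑ i, Q i * T i = 0 := by
    rw [← hsum, ← Finset.univ_sigma_univ, Finset.sum_sigma]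
    apply Finset.sum_congr rfl
    intro i _
    rw [hT, Finset.mul_sum, Fintype.sum_prod_type]
    apply Finset.sum_congr rfl
    intro j _
    rw [hP, Finset.mul_sum, Finset.mul_sum]
    apply Finset.sum_congr rfl
    intro k _
    rw [smul_eq_C_mul]; ring
  -- coprimality
  have hcop : ∀ i, IsCoprime (φ i ^ ℓ i) (Q i) := by
    intro i
    refine IsCoprime.pow_left ?_
    refine IsCoprime.prod_right fun m hm => IsCoprime.pow_right ?_
    have hmi : m ≠ i := (Finset.mem_erase.mp hm).1
    refine (hirr i).coprime_iff_not_dvd.mpr fun hdvd => ?_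
    exact hdist i m (Ne.symm hmi)
      (eq_of_monic_of_associated (hmon i) (hmon m) ((hirr i).associated_of_dvd (hirr m) hdvd))
  have hTzero : ∀ i, T i = 0 := by
    intro i
    have hdvdQT : φ i ^ ℓ i ∣ Q i * T i := by
      have hsplit : Q i * T i = -∑ m ∈ Finset.univ.erase i, Q m * T m := by
        have := Finset.sum_erase_add Finset.univ (fun m => Q m * T m) (Finset.mem_univ i)
        rw [step1] at this
        linear_combination this
      rw [hsplit]
      refine Dvd.dvd.neg_right (Finset.dvd_sum fun m hm => ?_)
      refine Dvd.dvd.mul_right ?_ _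
      rw [hQ]
      exact Finset.dvd_prod_of_mem _
        (Finset.mem_erase.mpr ⟨Ne.symm (Finset.mem_erase.mp hm).1, Finset.mem_univ i⟩)
    have hdvdT : φ i ^ ℓ i ∣ T i := (hcop i).dvd_of_dvd_mul_left hdvdQT
    refine eq_zero_of_dvd_of_degree_lt hdvdT ?_
    have hdegpow : (φ i ^ ℓ i).degree = ((ℓ i * D i : ℕ) : WithBot ℕ) := by
      rw [degree_pow, hdegφ i]
      push_cast
      rw [nsmul_eq_mul]
    rw [hT, hdegpow]
    refine lt_of_le_of_lt (degree_sum_le _ _) ?_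
    rw [Finset.sup_lt_iff (by exact bot_lt_iff_ne_bot.mpr (by exact_mod_cast WithBot.coe_ne_bot))]
    intro j _
    by_cases hPj : P i j = 0
    · rw [hPj, mul_zero, degree_zero]
      exact bot_lt_iff_ne_bot.mpr (by exact_mod_cast WithBot.coe_ne_bot)
    · have h1 : (φ i ^ (ℓ i - 1 - (j : ℕ)) * P i j).natDegree
          = (ℓ i - 1 - (j : ℕ)) * D i + (P i j).natDegree := by
        rw [natDegree_mul (pow_ne_zero _ (hφ0 i)) hPj, natDegree_pow, hdeg i]
      have hPjd : (P i j).natDegree < D i := by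
        have := hPdeg i j
        rw [degree_eq_natDegree hPj, hdegφ i] at this
        exact_mod_cast this
      have h2 : (φ i ^ (ℓ i - 1 - (j : ℕ)) * P i j).natDegree < ℓ i * D i := by
        rw [h1]
        have hjl : (j : ℕ) < ℓ i := j.2
        have h3 : (ℓ i - 1 - (j : ℕ)) + 1 ≤ ℓ i := by omega
        calc (ℓ i - 1 - (j : ℕ)) * D i + (P i j).natDegree
            < (ℓ i - 1 - (j : ℕ)) * D i + D i := by omega
          _ = ((ℓ i - 1 - (j : ℕ)) + 1) * D i := by ring
          _ ≤ ℓ i * D i := Nat.mul_le_mul_right _ h3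
      calc (φ i ^ (ℓ i - 1 - (j : ℕ)) * P i j).degree
          ≤ ((φ i ^ (ℓ i - 1 - (j : ℕ)) * P i j).natDegree : WithBot ℕ) := degree_le_natDegree
        _ < ((ℓ i * D i : ℕ) : WithBot ℕ) := by exact_mod_cast h2
  -- from T i = 0, each P i j = 0
  have hPzero : ∀ i (j : Fin (ℓ i)), P i j = 0 := by
    intro i j0
    set Pn : ℕ → K[X] := fun j => if h : j < ℓ i then P i ⟨j, h⟩ else 0 with hPn
    have hTn : ∑ j ∈ Finset.range (ℓ i), φ i ^ j * Pn (ℓ i - 1 - j) = 0 := by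
      rw [← Finset.sum_range_reflect]
      rw [← hTzero i, hT]
      rw [← Fin.sum_univ_eq_sum_range (fun j => φ i ^ (ℓ i - 1 - j) * Pn (ℓ i - 1 - (ℓ i - 1 - j)))]
      apply Finset.sum_congr rfl
      intro j _
      have hj : (j : ℕ) < ℓ i := j.2
      have he : ℓ i - 1 - (ℓ i - 1 - (j : ℕ)) = (j : ℕ) := by omega
      rw [he, hPn]
      simp [hj]
    have hPdeg' : ∀ j, (Pn (ℓ i - 1 - j)).degree < (φ i).degree := by
      intro j
      rw [hPn]
      by_cases h : ℓ i - 1 - j < ℓ i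
      · simpa [h] using hPdeg i ⟨_, h⟩
      · simp only [dif_neg h, degree_zero]
        exact bot_lt_iff_ne_bot.mpr (fun hb => (hφ0 i) (degree_eq_bot.mp hb))
    have key := aux_expansion (hmon i) (ℓ i) (fun j => Pn (ℓ i - 1 - j)) hPdeg' hTn
    have hj0 : (j0 : ℕ) < ℓ i := j0.2
    have := key (ℓ i - 1 - (j0 : ℕ)) (by omega)
    have he : ℓ i - 1 - (ℓ i - 1 - (j0 : ℕ)) = (j0 : ℕ) := by omega
    rw [he, hPn] at this
    simpa [hj0] using this
  -- extract coefficients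
  rintro ⟨i, j, k⟩
  have := hPzero i j
  have hc := congrArg (fun q => Polynomial.coeff q (k : ℕ)) this
  simp only [hP, Polynomial.finset_sum_coeff, Polynomial.coeff_C_mul, Polynomial.coeff_X_pow,
    Polynomial.coeff_zero] at hc
  rw [Finset.sum_eq_single k] at hc
  · simpa using hc
  · intro k' _ hk'
    have hne : (k : ℕ) ≠ (k' : ℕ) := fun h => hk' (Fin.val_injective h).symm
    simp [hne]
  · intro h; exact absurd (Finset.mem_univ k) h

theorem stmt14 (p : ℕ) (hp : p.Prime) (n t : ℕ) (f : Polynomial ℤ)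
    (hf : f.Monic) (hdeg : f.natDegree = n) (hirr : Irreducible f)
    (θ : ℂ) (hθ : Polynomial.aeval θ f = 0)
    (φ : Fin t → Polynomial ℤ) (ℓ : Fin t → ℕ)
    (hmon : ∀ i, (φ i).Monic)
    (hirrφ : ∀ i, Irreducible ((φ i).map (Int.castRingHom (ZMod p))))
    (hdist : ∀ i j, i ≠ j →
      (φ i).map (Int.castRingHom (ZMod p)) ≠ (φ j).map (Int.castRingHom (ZMod p)))
    (hℓ : ∀ i, 1 ≤ ℓ i)
    (hfac : f.map (Int.castRingHom (ZMod p)) =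
      ∏ i, ((φ i).map (Int.castRingHom (ZMod p))) ^ (ℓ i))
    (α : (Σ i : Fin t, Fin (ℓ i) × Fin ((φ i).natDegree)) → ℂ)
    (hα : ∀ x, α x = Polynomial.aeval θ ((f /ₘ (φ x.1) ^ ((x.2.1 : ℕ) + 1)) * X ^ (x.2.2 : ℕ))) :
    LinearIndependent ℤ α ∧
    ∀ z ∈ Algebra.adjoin ℤ ({θ} : Set ℂ),
      ∃ (d : ℤ) (c : (Σ i : Fin t, Fin (ℓ i) × Fin ((φ i).natDegree)) → ℤ),
        ¬ (p : ℤ) ∣ d ∧ (d : ℂ) * z = ∑ x, (c x : ℂ) * α x := by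
  classical
  haveI : Fact p.Prime := ⟨hp⟩
  set rh : ℤ →+* ZMod p := Int.castRingHom (ZMod p) with hrh
  -- basic degree facts
  have hnpos : 0 < n := by
    rcases Nat.eq_zero_or_pos n with h0 | h
    · exfalso
      apply hirr.not_isUnit
      have h1 : f = 1 := hf.natDegree_eq_zero.mp (by omega)
      rw [h1]; exact isUnit_one
    · exact h
  have hf1 : f ≠ 1 := fun h1 => hirr.not_isUnit (h1 ▸ isUnit_one)
  have hφmon : ∀ i, ((φ i).map rh).Monic := fun i => (hmon i).map rh
  have hφdeg : ∀ i, ((φ i).map rh).natDegree = (φ i).natDegree :=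
    fun i => (hmon i).natDegree_map rh
  have hdpos : ∀ i, 0 < (φ i).natDegree := fun i => (hφdeg i) ▸ (hirrφ i).natDegree_pos
  have hfb : (f.map rh).natDegree = n := by rw [hf.natDegree_map, hdeg]
  have hsumdeg : ∑ i, ℓ i * (φ i).natDegree = n := by
    rw [← hfb, hfac, natDegree_prod _ _ (fun i _ => ((hφmon i).pow _).ne_zero)]
    apply Finset.sum_congr rfl
    intro i _
    rw [natDegree_pow, hφdeg]
  have hln : ∀ i, ℓ i * (φ i).natDegree ≤ n := fun i =>
    hsumdeg ▸ Finset.single_le_sum (f := fun i => ℓ i * (φ i).natDegree)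
      (fun _ _ => Nat.zero_le _) (Finset.mem_univ i)
  set g : (Σ i : Fin t, Fin (ℓ i) × Fin ((φ i).natDegree)) → Polynomial ℤ :=
    fun x => (f /ₘ (φ x.1) ^ ((x.2.1 : ℕ) + 1)) * X ^ ((x.2.2 : ℕ)) with hg
  have hαg : ∀ x, α x = aeval θ (g x) := hα
  have hgdeg : ∀ x, (g x).natDegree < n := by
    rintro ⟨i, j, k⟩
    have hjd : ((j : ℕ) + 1) * (φ i).natDegree ≤ n :=
      le_trans (Nat.mul_le_mul_right _ j.2) (hln i)
    have hq : (f /ₘ (φ i) ^ ((j : ℕ) + 1)).natDegree = n - ((j : ℕ) + 1) * (φ i).natDegree := by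
      rw [natDegree_divByMonic f ((hmon i).pow _), natDegree_pow, hdeg, mul_comm]
    have h2 : (g ⟨i, (j, k)⟩).natDegree ≤ (f /ₘ (φ i) ^ ((j : ℕ) + 1)).natDegree + (k : ℕ) := by
      refine le_trans natDegree_mul_le ?_
      rw [natDegree_X_pow]
    have hk := k.2
    have hd := hdpos i
    have hd1 : (φ i).natDegree ≤ ((j : ℕ) + 1) * (φ i).natDegree :=
      Nat.le_mul_of_pos_left _ (by omega)
    rw [hq] at h2
    omega
  have hgred : ∀ x, (g x).map rh = ((φ x.1).map rh) ^ (ℓ x.1 - 1 - (x.2.1 : ℕ)) *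
      (∏ m ∈ Finset.univ.erase x.1, ((φ m).map rh) ^ ℓ m) * X ^ ((x.2.2 : ℕ)) := by
    rintro ⟨i, j, k⟩
    show ((f /ₘ (φ i) ^ ((j : ℕ) + 1)) * X ^ (k : ℕ)).map rh = _
    rw [Polynomial.map_mul, Polynomial.map_pow, map_X,
      map_divByMonic rh ((hmon i).pow _), Polynomial.map_pow]
    congr 1
    have hsplit : f.map rh = ((φ i).map rh) ^ ((j : ℕ) + 1) *
        (((φ i).map rh) ^ (ℓ i - 1 - (j : ℕ)) *
          ∏ m ∈ Finset.univ.erase i, ((φ m).map rh) ^ ℓ m) := by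
      rw [hfac, ← Finset.mul_prod_erase Finset.univ _ (Finset.mem_univ i), ← mul_assoc,
        ← pow_add]
      congr 2
      have := j.2
      omega
    rw [hsplit, mul_divByMonic_cancel_left _ ((hφmon i).pow _)]
  -- mod-p linear independence
  have hindep : ∀ (cc : (Σ i : Fin t, Fin (ℓ i) × Fin ((φ i).natDegree)) → ZMod p),
      ∑ x, cc x • ((g x).map rh) = 0 → ∀ x, cc x = 0 := by
    intro cc hcc
    refine aux_indep (fun i => (φ i).map rh) hφmon hirrφ hdist hφdeg cc ?_
    rw [← hcc]
    apply Finset.sum_congr rfl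
    intro x _
    rw [hgred x]
  -- the coefficient matrix
  have hcard : Fintype.card (Σ i : Fin t, Fin (ℓ i) × Fin ((φ i).natDegree)) = n := by
    rw [Fintype.card_sigma]
    rw [← hsumdeg]
    apply Finset.sum_congr rfl
    intro i _
    rw [Fintype.card_prod, Fintype.card_fin, Fintype.card_fin]
  set e : (Σ i : Fin t, Fin (ℓ i) × Fin ((φ i).natDegree)) ≃ Fin n :=
    Fintype.equivFinOfCardEq hcard with he
  set M : Matrix (Fin n) (Fin n) ℤ :=
    Matrix.of (fun m r => (g (e.symm r)).coeff (m : ℕ)) with hM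
  -- coefficient computation
  have hGcoeff : ∀ (w : Fin n → ℤ) (m : ℕ),
      (∑ x, w (e x) • g x).coeff m = if h : m < n then (M *ᵥ w) ⟨m, h⟩ else 0 := by
    intro w m
    rw [finset_sum_coeff]
    by_cases hm : m < n
    · rw [dif_pos hm]
      have : ∑ x, (w (e x) • g x).coeff m
          = ∑ r : Fin n, (w (e (e.symm r)) • g (e.symm r)).coeff m :=
        (Equiv.sum_comp e.symm (fun x => (w (e x) • g x).coeff m)).symm
      rw [this]
      simp only [Equiv.apply_symm_apply]
      simp only [Matrix.mulVec, dotProduct, hM, Matrix.of_apply, coeff_smul,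
        smul_eq_mul]
      apply Finset.sum_congr rfl
      intro r _
      ring
    · rw [dif_neg hm]
      apply Finset.sum_eq_zero
      intro x _
      rw [coeff_smul, coeff_eq_zero_of_natDegree_lt (lt_of_lt_of_le (hgdeg x) (by omega)),
        smul_zero]
  -- invertibility of M mod p
  have hdet : ¬ (p : ℤ) ∣ M.det := by
    have hunit : IsUnit (M.map (Int.cast : ℤ → ZMod p)) := by
      rw [← Matrix.linearIndependent_cols_iff_isUnit]
      rw [Fintype.linearIndependent_iff]
      intro cc hcc
      have hcc' : ∀ x, (cc ∘ e) x = 0 := by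
        apply hindep
        ext m
        rw [finset_sum_coeff, coeff_zero]
        by_cases hm : m < n
        · have hcol := congrFun hcc ⟨m, hm⟩
          simp only [Finset.sum_apply, Pi.smul_apply, Matrix.transpose_apply, Matrix.map_apply,
            hM, Matrix.of_apply, smul_eq_mul, Pi.zero_apply] at hcol
          rw [← Equiv.sum_comp e.symm
            (fun x => ((cc ∘ e) x • (g x).map rh).coeff m)]
          simp only [Function.comp_apply, Equiv.apply_symm_apply, coeff_smul, smul_eq_mul,
            coeff_map]
          rw [← hcol]
          rfl
        · apply Finset.sum_eq_zero
          intro x _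
          rw [coeff_smul, coeff_eq_zero_of_natDegree_lt
            (lt_of_le_of_lt natDegree_map_le (lt_of_lt_of_le (hgdeg x) (by omega))), smul_zero]
      intro r
      have := hcc' (e.symm r)
      simpa using this
    intro hdvd
    have h0 : ((M.det : ℤ) : ZMod p) = 0 := (ZMod.intCast_zmod_eq_zero_iff_dvd _ _).mpr hdvd
    rw [Matrix.isUnit_iff_isUnit_det] at hunit
    have hmapeq : (M.map (Int.cast : ℤ → ZMod p)).det = ((M.det : ℤ) : ZMod p) := by
      have h6 := RingHom.map_det rh M
      rw [RingHom.mapMatrix_apply] at h6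
      exact h6.symm
    rw [hmapeq, h0] at hunit
    exact (not_isUnit_zero hunit).elim
  have hdet0 : M.det ≠ 0 := fun h0 => hdet (h0 ▸ dvd_zero _)
  -- G = 0 reconstruction over ℚ via minpoly
  have hkill : ∀ (G : Polynomial ℤ), G.degree < (n : WithBot ℕ) → aeval θ G = 0 → G = 0 := by
    intro G hGdeg hGθ
    have hfQmon : (f.map (Int.castRingHom ℚ)).Monic := hf.map _
    have hfQirr : Irreducible (f.map (Int.castRingHom ℚ)) := by
      have := (hf.irreducible_iff_irreducible_map_fraction_map (K := ℚ)).mp hirr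
      rwa [algebraMap_int_eq] at this
    have hfQθ : aeval θ (f.map (Int.castRingHom ℚ)) = 0 := by
      rw [← algebraMap_int_eq, aeval_map_algebraMap]
      exact hθ
    have hmin : minpoly ℚ θ = f.map (Int.castRingHom ℚ) := by
      exact (minpoly.eq_of_irreducible_of_monic hfQirr hfQθ hfQmon).symm
    have hGQθ : aeval θ (G.map (Int.castRingHom ℚ)) = 0 := by
      rw [← algebraMap_int_eq, aeval_map_algebraMap]
      exact hGθ
    have hdvd : minpoly ℚ θ ∣ G.map (Int.castRingHom ℚ) := minpoly.dvd ℚ θ hGQθ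
    have hdegQ : (G.map (Int.castRingHom ℚ)).degree < (minpoly ℚ θ).degree := by
      rw [hmin]
      have h1 : (f.map (Int.castRingHom ℚ)).degree = (n : WithBot ℕ) := by
        rw [degree_eq_natDegree hfQmon.ne_zero, hf.natDegree_map, hdeg]
      rw [h1]
      exact lt_of_le_of_lt degree_map_le hGdeg
    have hGQ : G.map (Int.castRingHom ℚ) = 0 := eq_zero_of_dvd_of_degree_lt hdvd hdegQ
    have hinj : Function.Injective (Int.castRingHom ℚ) := Int.cast_injective
    exact Polynomial.map_injective _ hinj (by rw [hGQ, Polynomial.map_zero])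
  -- Part 1 : linear independence
  constructor
  · rw [Fintype.linearIndependent_iff]
    intro c hc
    set G : Polynomial ℤ := ∑ x, c x • g x with hG
    have hGθ : aeval θ G = 0 := by
      rw [hG, map_sum]
      rw [← hc]
      apply Finset.sum_congr rfl
      intro x _
      rw [map_zsmul, hαg x]
    have hGdeg : G.degree < (n : WithBot ℕ) := by
      rw [hG]
      refine lt_of_le_of_lt (degree_sum_le _ _) ?_
      rw [Finset.sup_lt_iff (bot_lt_iff_ne_bot.mpr (by exact_mod_cast WithBot.coe_ne_bot))]
      intro x _
      refine lt_of_le_of_lt (degree_smul_le _ _) ?_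
      refine lt_of_le_of_lt degree_le_natDegree ?_
      exact_mod_cast hgdeg x
    have hG0 : G = 0 := hkill G hGdeg hGθ
    have hMv : M *ᵥ (c ∘ e.symm) = 0 := by
      funext m
      have h1 := hGcoeff (c ∘ e.symm) (m : ℕ)
      have h2 : (∑ x, (c ∘ e.symm) (e x) • g x) = G := by
        rw [hG]
        apply Finset.sum_congr rfl
        intro x _
        simp
      rw [h2, hG0, coeff_zero] at h1
      have hm : (m : ℕ) < n := m.2
      rw [dif_pos hm] at h1
      simp only [Pi.zero_apply]
      rw [← h1]
    have hw : ∀ r, (c ∘ e.symm) r = 0 := by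
      intro r
      have h3 : M.adjugate *ᵥ (M *ᵥ (c ∘ e.symm)) = 0 := by rw [hMv, Matrix.mulVec_zero]
      rw [Matrix.mulVec_mulVec, Matrix.adjugate_mul, Matrix.smul_mulVec,
        Matrix.one_mulVec] at h3
      have h4 := congrFun h3 r
      simp only [Pi.smul_apply, smul_eq_mul, Pi.zero_apply] at h4
      exact (mul_eq_zero.mp h4).resolve_left hdet0
    intro x
    have := hw (e x)
    simpa using this
  -- Part 2 : spanning up to denominator prime to p
  · intro z hz
    rw [Algebra.adjoin_singleton_eq_range_aeval] at hz
    obtain ⟨h, rfl⟩ := hz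
    set h' : Polynomial ℤ := h %ₘ f with hh'
    have hzval : aeval θ h = aeval θ h' := by
      conv_lhs => rw [← modByMonic_add_div h f]
      rw [map_add, _root_.map_mul, hθ, zero_mul, add_zero]
    have hh'deg : h'.natDegree < n := by
      rw [hh', ← hdeg]
      exact natDegree_modByMonic_lt h hf hf1
    set v : Fin n → ℤ := fun m => h'.coeff (m : ℕ) with hv
    set w : Fin n → ℤ := M.adjugate *ᵥ v with hwdef
    refine ⟨M.det, fun x => w (e x), hdet, ?_⟩
    have hpoly : (∑ x, w (e x) • g x) = M.det • h' := by
      ext m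
      rw [hGcoeff w m]
      by_cases hm : m < n
      · rw [dif_pos hm]
        have h5 : M *ᵥ w = M.det • v := by
          rw [hwdef, Matrix.mulVec_mulVec, Matrix.mul_adjugate, Matrix.smul_mulVec,
            Matrix.one_mulVec]
        rw [h5]
        simp only [Pi.smul_apply, smul_eq_mul, coeff_smul, hv]
      · rw [dif_neg hm]
        rw [coeff_smul, coeff_eq_zero_of_natDegree_lt (lt_of_lt_of_le hh'deg (by omega)),
          smul_zero]
    have hfinal := congrArg (aeval θ) hpoly
    rw [map_sum, map_zsmul] at hfinal
    show (M.det : ℂ) * (aeval θ) h = ∑ x, ((w (e x) : ℤ) : ℂ) * α x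
    rw [hzval]
    calc (M.det : ℂ) * aeval θ h' = M.det • aeval θ h' := by rw [zsmul_eq_mul]
      _ = ∑ x, w (e x) • aeval θ (g x) := by
          rw [← hfinal]
          apply Finset.sum_congr rfl
          intro x _
          rw [map_zsmul]
      _ = ∑ x, ((w (e x) : ℤ) : ℂ) * α x := by
          apply Finset.sum_congr rfl
          intro x _
          rw [hαg x, zsmul_eq_mul]
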